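/- If a vertex property over Π is defined by some Mean-GNN and is also defined by some GML formula, then it is defined by an ML formula. -/

import Mathlib

open scoped Classical

/-- A `α`-labeled finite directed graph. -/
structure LabeledGraph (α : Type) : Type 1 where
  V : Type
  [fintypeV : Fintype V]
  adj : V → V → Prop
  label : V → α → Prop

attribute [instance] LabeledGraph.fintypeV

namespace LabeledGraph

variable {α : Type}

/-- The neighborhood (set of successors) of a vertex. -/
def nbhd (G : LabeledGraph α) (v : G.V) : Set G.V := {u | G.adj v u}

/-- The neighborhood of a vertex, as a finset. -/
noncomputable def nbhdFinset (G : LabeledGraph α) (v : G.V) : Finset G.V :=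
  Finset.univ.filter (fun u => G.adj v u)

/-- The `c`-scaling of a graph: each vertex is multiplied `c` times. -/
def scale (G : LabeledGraph α) (c : ℕ) : LabeledGraph α where
  V := G.V × Fin c
  adj := fun p q => G.adj p.1 q.1
  label := fun p => G.label p.1

end LabeledGraph

/-- Formulas of modal logic ML. -/
inductive ML (α : Type) : Type where
  | atom : α → ML α
  | neg  : ML α → ML α
  | or   : ML α → ML α → ML α
  | dia  : ML α → ML α

/-- Satisfaction for ML. -/
def ML.sat {α : Type} (G : LabeledGraph α) : ML α → G.V → Prop
  | .atom p, v => G.label v p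
  | .neg φ, v => ¬ ML.sat G φ v
  | .or φ ψ, v => ML.sat G φ v ∨ ML.sat G ψ v
  | .dia φ, v => ∃ u, G.adj v u ∧ ML.sat G φ u

/-- Formulas of graded modal logic GML. -/
inductive GML (α : Type) : Type where
  | atom : α → GML α
  | neg  : GML α → GML α
  | or   : GML α → GML α → GML α
  | dia  : ℕ → GML α → GML α

/-- Satisfaction for GML: `dia n φ` is `◊^{≥n} φ`. -/
def GML.sat {α : Type} (G : LabeledGraph α) : GML α → G.V → Prop
  | .atom p, v => G.label v p
  | .neg φ, v => ¬ GML.sat G φ v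
  | .or φ ψ, v => GML.sat G φ v ∨ GML.sat G ψ v
  | .dia n φ, v => n ≤ {u | G.adj v u ∧ GML.sat G φ u}.ncard

/-- Formulas of ratio modal logic RML; diamonds carry a ratio `r ∈ [0,1]`. -/
inductive RML (α : Type) : Type where
  | atom  : α → RML α
  | neg   : RML α → RML α
  | or    : RML α → RML α → RML α
  | diaGe : Set.Icc (0:ℝ) 1 → RML α → RML α
  | diaGt : Set.Icc (0:ℝ) 1 → RML α → RML α

/-- Satisfaction for RML. If a vertex has no successors then `◊^{≥r}φ`
holds and `◊^{>r}φ` fails; otherwise the fraction of successors satisfying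
`φ` is compared with `r`. -/
noncomputable def RML.sat {α : Type} (G : LabeledGraph α) : RML α → G.V → Prop
  | .atom p, v => G.label v p
  | .neg φ, v => ¬ RML.sat G φ v
  | .or φ ψ, v => RML.sat G φ v ∨ RML.sat G ψ v
  | .diaGe r φ, v => (G.nbhd v).Nonempty →
      (r : ℝ) ≤ ({u | G.adj v u ∧ RML.sat G φ u}.ncard : ℝ) / ((G.nbhd v).ncard : ℝ)
  | .diaGt r φ, v => (G.nbhd v).Nonempty ∧
      (r : ℝ) < ({u | G.adj v u ∧ RML.sat G φ u}.ncard : ℝ) / ((G.nbhd v).ncard : ℝ)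

/-- Formulas of AFML[1] (diamond fragment of alternation-free modal logic). -/
inductive AFML1 (α : Type) : Type where
  | atom   : α → AFML1 α
  | natom  : α → AFML1 α
  | boxBot : AFML1 α
  | and    : AFML1 α → AFML1 α → AFML1 α
  | or     : AFML1 α → AFML1 α → AFML1 α
  | dia    : AFML1 α → AFML1 α

/-- Satisfaction for AFML[1]. -/
def AFML1.sat {α : Type} (G : LabeledGraph α) : AFML1 α → G.V → Prop
  | .atom p, v => G.label v p
  | .natom p, v => ¬ G.label v p
  | .boxBot, v => ∀ u, ¬ G.adj v u
  | .and φ ψ, v => AFML1.sat G φ v ∧ AFML1.sat G ψ v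
  | .or φ ψ, v => AFML1.sat G φ v ∨ AFML1.sat G ψ v
  | .dia φ, v => ∃ u, G.adj v u ∧ AFML1.sat G φ u

/-- Modal depth of an AFML[1] formula. -/
def AFML1.depth {α : Type} : AFML1 α → ℕ
  | .atom _ => 0
  | .natom _ => 0
  | .boxBot => 1
  | .and φ ψ => max (AFML1.depth φ) (AFML1.depth ψ)
  | .or φ ψ => max (AFML1.depth φ) (AFML1.depth ψ)
  | .dia φ => AFML1.depth φ + 1

/-- Formulas of AFML[2] (box fragment of alternation-free modal logic). -/
inductive AFML2 (α : Type) : Type where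
  | atom   : α → AFML2 α
  | natom  : α → AFML2 α
  | diaTop : AFML2 α
  | and    : AFML2 α → AFML2 α → AFML2 α
  | or     : AFML2 α → AFML2 α → AFML2 α
  | box    : AFML2 α → AFML2 α

/-- Satisfaction for AFML[2]. -/
def AFML2.sat {α : Type} (G : LabeledGraph α) : AFML2 α → G.V → Prop
  | .atom p, v => G.label v p
  | .natom p, v => ¬ G.label v p
  | .diaTop, v => ∃ u, G.adj v u
  | .and φ ψ, v => AFML2.sat G φ v ∧ AFML2.sat G ψ v
  | .or φ ψ, v => AFML2.sat G φ v ∨ AFML2.sat G ψ v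
  | .box φ, v => ∀ u, G.adj v u → AFML2.sat G φ u

/-- Alternation-free modal logic: AFML[1] formulas together with AFML[2] formulas. -/
def AFML (α : Type) : Type := AFML1 α ⊕ AFML2 α

/-- Satisfaction for AFML. -/
def AFML.sat {α : Type} (G : LabeledGraph α) : AFML α → G.V → Prop
  | .inl φ => AFML1.sat G φ
  | .inr φ => AFML2.sat G φ

/-- The three aggregation functions. -/
inductive Agg : Type where
  | sum : Agg
  | mean : Agg
  | max : Agg

/-- Apply an aggregation function componentwise to the (multiset of) values of `x`
over the finset `s`; empty aggregation yields `0` (so mean of the empty multiset is `0`). -/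
noncomputable def Agg.apply {V : Type} : Agg → Finset V → (V → ℝ) → ℝ
  | .sum, s, x => ∑ u ∈ s, x u
  | .mean, s, x => (∑ u ∈ s, x u) / (s.card : ℝ)
  | .max, s, x => if h : s.Nonempty then s.sup' h x else 0

/-- A GNN: `L` layers, dimensions `δ 0, …, δ L` with `δ 0 = |α|`,
combination functions `com ℓ : ℝ^{δ ℓ} × ℝ^{δ ℓ} → ℝ^{δ (ℓ+1)}` for `ℓ < L`,
and a threshold classification function `CLS(x) = 1 iff x_clsIdx ∼ clsThr`
where `∼` is `>` if `clsStrict` and `≥` otherwise. -/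
structure GNN (α : Type) [Fintype α] : Type where
  L : ℕ
  δ : ℕ → ℕ
  hδ0 : δ 0 = Fintype.card α
  com : (ℓ : ℕ) → (Fin (δ ℓ) → ℝ) → (Fin (δ ℓ) → ℝ) → (Fin (δ (ℓ+1)) → ℝ)
  clsIdx : Fin (δ L)
  clsStrict : Bool
  clsThr : ℝ

/-- The feature vector computed by a GNN (with aggregation `agg`) at layer `ℓ`
at vertex `v` of graph `G`. Layer 0 yields the 0/1 indicator vector of the labels. -/
noncomputable def GNN.feat {α : Type} [Fintype α] (𝒢 : GNN α) (agg : Agg)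
    (G : LabeledGraph α) : (ℓ : ℕ) → G.V → Fin (𝒢.δ ℓ) → ℝ
  | 0, v, i => if G.label v ((Fintype.equivFin α).symm (Fin.cast 𝒢.hδ0 i)) then 1 else 0
  | (ℓ+1), v, i =>
      𝒢.com ℓ (𝒢.feat agg G ℓ v)
        (fun j => agg.apply (G.nbhdFinset v) (fun u => 𝒢.feat agg G ℓ u j)) i

/-- The GNN accepts a pointed graph iff the classification function outputs 1 on
the final feature vector. -/
noncomputable def GNN.accepts {α : Type} [Fintype α] (𝒢 : GNN α) (agg : Agg)
    (G : LabeledGraph α) (v : G.V) : Prop :=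
  if 𝒢.clsStrict then 𝒢.clsThr < 𝒢.feat agg G 𝒢.L v 𝒢.clsIdx
  else 𝒢.clsThr ≤ 𝒢.feat agg G 𝒢.L v 𝒢.clsIdx

/-- A GNN is simple with activation function `f` if each combination function
has the form `COM(x_v, x_a) = f(x_v·C + x_a·A + b)` (componentwise `f`). -/
def GNN.IsSimple {α : Type} [Fintype α] (𝒢 : GNN α) (f : ℝ → ℝ) : Prop :=
  ∀ ℓ < 𝒢.L, ∃ (C A : Fin (𝒢.δ ℓ) → Fin (𝒢.δ (ℓ+1)) → ℝ) (b : Fin (𝒢.δ (ℓ+1)) → ℝ),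
    ∀ (xv xa : Fin (𝒢.δ ℓ) → ℝ) (i : Fin (𝒢.δ (ℓ+1))),
      𝒢.com ℓ xv xa i = f ((∑ j, xv j * C j i) + (∑ j, xa j * A j i) + b i)

/-- All combination functions of the GNN are continuous. -/
def GNN.HasContinuousCom {α : Type} [Fintype α] (𝒢 : GNN α) : Prop :=
  ∀ ℓ < 𝒢.L,
    Continuous (fun p : (Fin (𝒢.δ ℓ) → ℝ) × (Fin (𝒢.δ ℓ) → ℝ) => 𝒢.com ℓ p.1 p.2)

/-- Truncated ReLU. -/
noncomputable def reluStar : ℝ → ℝ := fun x => min (max 0 x) 1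

/-- ReLU. -/
noncomputable def relu : ℝ → ℝ := fun x => max 0 x

/-- Two pointed graphs have the same vertex labels at their distinguished vertices. -/
def labelsEq {α : Type} (G1 G2 : LabeledGraph α) (v1 : G1.V) (v2 : G2.V) : Prop :=
  ∀ p, G1.label v1 p ↔ G2.label v2 p

/-- Spoiler wins the `ℓ`-round ML game on `((G1,v1),(G2,v2))`. -/
def spoilerWinsML {α : Type} (G1 G2 : LabeledGraph α) : ℕ → G1.V → G2.V → Prop
  | 0, v1, v2 => ¬ labelsEq G1 G2 v1 v2
  | (ℓ+1), v1, v2 =>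
      ¬ labelsEq G1 G2 v1 v2
      ∨ (∃ u1, G1.adj v1 u1 ∧ ∀ u2, G2.adj v2 u2 → spoilerWinsML G1 G2 ℓ u1 u2)
      ∨ (∃ u2, G2.adj v2 u2 ∧ ∀ u1, G1.adj v1 u1 → spoilerWinsML G1 G2 ℓ u1 u2)

/-- Spoiler wins the `ℓ`-round AFML[1] game on `((G1,v1),(G2,v2))`. -/
def spoilerWinsAFML1 {α : Type} (G1 G2 : LabeledGraph α) : ℕ → G1.V → G2.V → Prop
  | 0, v1, v2 => ¬ labelsEq G1 G2 v1 v2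
  | (ℓ+1), v1, v2 =>
      ¬ labelsEq G1 G2 v1 v2
      ∨ ((∀ u, ¬ G1.adj v1 u) ∧ (∃ u, G2.adj v2 u))
      ∨ (∃ u1, G1.adj v1 u1 ∧ ∀ u2, G2.adj v2 u2 → spoilerWinsAFML1 G1 G2 ℓ u1 u2)

/-- Spoiler wins the `ℓ`-round GML game with counting bound `c` on `((G1,v1),(G2,v2))`. -/
def spoilerWinsGML {α : Type} (c : ℕ) (G1 G2 : LabeledGraph α) : ℕ → G1.V → G2.V → Prop
  | 0, v1, v2 => ¬ labelsEq G1 G2 v1 v2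
  | (ℓ+1), v1, v2 =>
      ¬ labelsEq G1 G2 v1 v2
      ∨ (∃ U1 : Finset G1.V, (∀ u ∈ U1, G1.adj v1 u) ∧ 0 < U1.card ∧ U1.card ≤ c ∧
          ((G2.nbhd v2).ncard < U1.card ∨
            ∀ U2 : Finset G2.V, (∀ u ∈ U2, G2.adj v2 u) → U2.card = U1.card →
              ∃ u2 ∈ U2, ∀ u1 ∈ U1, spoilerWinsGML c G1 G2 ℓ u1 u2))
      ∨ (∃ U2 : Finset G2.V, (∀ u ∈ U2, G2.adj v2 u) ∧ 0 < U2.card ∧ U2.card ≤ c ∧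
          ((G1.nbhd v1).ncard < U2.card ∨
            ∀ U1 : Finset G1.V, (∀ u ∈ U1, G1.adj v1 u) → U1.card = U2.card →
              ∃ u1 ∈ U1, ∀ u2 ∈ U2, spoilerWinsGML c G1 G2 ℓ u1 u2))

/-- The ratio `1/2` as an element of `[0,1]`. -/
noncomputable def half : Set.Icc (0:ℝ) 1 := ⟨1/2, by norm_num⟩

/-- Extract some atom from a GML formula (so `α` is nonempty). -/
def GML.someAtom {α : Type} : GML α → α
  | .atom p => p
  | .neg φ => φ.someAtom
  | .or φ _ => φ.someAtom
  | .dia _ φ => φ.someAtom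

/-- A bound on all grades occurring in a GML formula. -/
def GML.gbound {α : Type} : GML α → ℕ
  | .atom _ => 0
  | .neg φ => φ.gbound
  | .or φ ψ => max φ.gbound ψ.gbound
  | .dia n φ => max n φ.gbound

/-- Translation of GML to ML collapsing graded diamonds, `p` a spare atom for ⊤. -/
def GML.tr {α : Type} (p : α) : GML α → ML α
  | .atom q => .atom q
  | .neg φ => .neg (φ.tr p)
  | .or φ ψ => .or (φ.tr p) (ψ.tr p)
  | .dia 0 _ => .or (.atom p) (.neg (.atom p))
  | .dia (_+1) φ => .dia (φ.tr p)

lemma sum_scale_aux {V : Type} [Fintype V] {c : ℕ} (P : V → Prop) (f : V → ℝ) :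
    ∑ w ∈ Finset.univ.filter (fun w : V × Fin c => P w.1), f w.1
      = c * ∑ u ∈ Finset.univ.filter P, f u := by
  rw [Finset.sum_filter, Finset.sum_filter, Fintype.sum_prod_type, Finset.mul_sum]
  simp [Finset.sum_const, mul_comm]

lemma card_scale_aux {V : Type} [Fintype V] {c : ℕ} (P : V → Prop) :
    (Finset.univ.filter (fun w : V × Fin c => P w.1)).card
      = c * (Finset.univ.filter P).card := by
  rw [Finset.card_filter, Finset.card_filter, Fintype.sum_prod_type, Finset.mul_sum]
  simp [Finset.sum_const, apply_ite Finset.card, mul_comm]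

lemma ncard_scale_aux {V : Type} [Fintype V] {c : ℕ} (P : V → Prop) :
    {w : V × Fin c | P w.1}.ncard = c * {u | P u}.ncard := by
  rw [← Nat.card_coe_set_eq, ← Nat.card_coe_set_eq]
  have e : ↑{w : V × Fin c | P w.1} ≃ (↑{u : V | P u} × Fin c) :=
    { toFun := fun w => (⟨w.1.1, w.2⟩, w.1.2)
      invFun := fun x => ⟨(x.1.1, x.2), x.1.2⟩
      left_inv := by rintro ⟨⟨a, b⟩, h⟩; rfl
      right_inv := by rintro ⟨⟨a, h⟩, b⟩; rfl }
  rw [Nat.card_congr e, Nat.card_prod, Nat.card_eq_fintype_card (α := Fin c)]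
  simp [mul_comm]

lemma mean_apply {V : Type} (s : Finset V) (x : V → ℝ) :
    Agg.apply Agg.mean s x = (∑ u ∈ s, x u) / (s.card : ℝ) := rfl

lemma mean_scale {V : Type} [Fintype V] {c : ℕ} (hc : c ≠ 0) (P : V → Prop)
    (f : V × Fin c → ℝ) (g : V → ℝ) (hfg : ∀ w, f w = g w.1) :
    (∑ u ∈ Finset.univ.filter (fun w : V × Fin c => P w.1), f u)
        / ((Finset.univ.filter (fun w : V × Fin c => P w.1)).card : ℝ)
      = (∑ u ∈ Finset.univ.filter P, g u) / ((Finset.univ.filter P).card : ℝ) := by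
  rw [Finset.sum_congr rfl (fun u _ => hfg u), sum_scale_aux P g, card_scale_aux P,
    Nat.cast_mul, mul_div_mul_left _ _ (by exact_mod_cast hc)]

lemma nbhdFinset_scale {α : Type} (G : LabeledGraph α) (c : ℕ) (v : G.V) (i : Fin c) :
    (G.scale c).nbhdFinset (v, i)
      = Finset.univ.filter (fun w : G.V × Fin c => G.adj v w.1) := by
  ext w
  simp only [LabeledGraph.nbhdFinset, Finset.mem_filter, Finset.mem_univ, true_and]
  exact ⟨fun h => Finset.mem_filter.2 ⟨Finset.mem_univ _, h⟩, fun h => (Finset.mem_filter.1 h).2⟩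

lemma feat_scale {α : Type} [Fintype α] (𝒢 : GNN α) (G : LabeledGraph α) (c : ℕ) :
    ∀ (ℓ : ℕ) (v : G.V) (i : Fin c) (j : Fin (𝒢.δ ℓ)),
      𝒢.feat Agg.mean (G.scale c) ℓ (v, i) j = 𝒢.feat Agg.mean G ℓ v j := by
  intro ℓ
  induction ℓ with
  | zero => intro v i j; rfl
  | succ ℓ ih =>
    intro v i j
    have hc : c ≠ 0 := by rintro rfl; exact i.elim0
    show 𝒢.com ℓ _ _ j = 𝒢.com ℓ _ _ j
    congr 1
    · funext j'; exact ih v i j'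
    · funext j'
      show Agg.apply Agg.mean _ _ = Agg.apply Agg.mean _ _
      rw [mean_apply, mean_apply]
      exact mean_scale hc (fun u => G.adj v u)
        (fun u => 𝒢.feat Agg.mean (G.scale c) ℓ u j')
        (fun u => 𝒢.feat Agg.mean G ℓ u j') (fun w => ih w.1 w.2 j')

lemma accepts_scale {α : Type} [Fintype α] (𝒢 : GNN α) (G : LabeledGraph α) (c : ℕ)
    (v : G.V) (i : Fin c) :
    𝒢.accepts Agg.mean (G.scale c) (v, i) ↔ 𝒢.accepts Agg.mean G v := by
  unfold GNN.accepts
  rw [feat_scale]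

lemma sat_scale {α : Type} (G : LabeledGraph α) (c : ℕ) (p : α) :
    ∀ (φ : GML α), φ.gbound ≤ c → ∀ (v : G.V) (i : Fin c),
      (GML.sat (G.scale c) φ (v, i) ↔ ML.sat G (φ.tr p) v) := by
  intro φ
  induction φ with
  | atom q => intro _ v i; rfl
  | neg φ ih =>
    intro hb v i
    exact not_congr (ih hb v i)
  | or φ ψ ih1 ih2 =>
    intro hb v i
    exact or_congr (ih1 (le_trans (le_max_left _ _) hb) v i)
      (ih2 (le_trans (le_max_right _ _) hb) v i)
  | dia n φ ih =>
    intro hb v i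
    have hn : n ≤ c := le_trans (le_max_left _ _) hb
    have hφ := ih (le_trans (le_max_right _ _) hb)
    have hset : {w : (G.scale c).V | (G.scale c).adj (v, i) w ∧ GML.sat (G.scale c) φ w}
        = {w : G.V × Fin c | G.adj v w.1 ∧ ML.sat G (φ.tr p) w.1} := by
      ext ⟨u, j⟩
      exact and_congr Iff.rfl (hφ u j)
    show n ≤ _ ↔ _
    have hcount : ({w : (G.scale c).V | (G.scale c).adj (v, i) w ∧ GML.sat (G.scale c) φ w}).ncard
        = c * {u | G.adj v u ∧ ML.sat G (φ.tr p) u}.ncard := by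
      rw [hset]; exact ncard_scale_aux (fun u => G.adj v u ∧ ML.sat G (φ.tr p) u)
    rw [hcount]
    match n, hn with
    | 0, _ =>
      simp only [Nat.zero_le, true_iff]
      show ML.sat G (.or (.atom p) (.neg (.atom p))) v
      by_cases hp : G.label v p
      · exact Or.inl hp
      · exact Or.inr hp
    | (m+1), hn =>
      show m + 1 ≤ c * _ ↔ ∃ u, G.adj v u ∧ ML.sat G (φ.tr p) u
      constructor
      · intro hle
        have hpos : 0 < {u | G.adj v u ∧ ML.sat G (φ.tr p) u}.ncard := by
          by_contra hz
          push_neg at hz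
          interval_cases h : {u | G.adj v u ∧ ML.sat G (φ.tr p) u}.ncard
          omega
        rw [Set.ncard_pos (Set.toFinite _)] at hpos
        exact hpos
      · intro hex
        have hpos : 0 < {u | G.adj v u ∧ ML.sat G (φ.tr p) u}.ncard :=
          (Set.ncard_pos (Set.toFinite _)).2 hex
        calc m + 1 ≤ c := hn
          _ = c * 1 := (mul_one c).symm
          _ ≤ c * _ := Nat.mul_le_mul_left c hpos

/-- If a vertex property is defined by some Mean-GNN and also by some
GML formula, then it is defined by an ML formula. -/
theorem stmt15 {α : Type} [Fintype α] (𝒢 : GNN α) (ψ : GML α)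
    (h : ∀ (G : LabeledGraph α) (v : G.V), 𝒢.accepts Agg.mean G v ↔ GML.sat G ψ v) :
    ∃ φ : ML α, ∀ (G : LabeledGraph α) (v : G.V),
      𝒢.accepts Agg.mean G v ↔ ML.sat G φ v := by
  set p := ψ.someAtom
  set c := ψ.gbound + 1 with hcdef
  have hc : 0 < c := Nat.succ_pos _
  refine ⟨ψ.tr p, fun G v => ?_⟩
  have h1 := accepts_scale 𝒢 G c v ⟨0, hc⟩
  have h2 := h (G.scale c) (v, ⟨0, hc⟩)
  have h3 := sat_scale G c p ψ (by omega) v ⟨0, hc⟩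
  rw [← h1, h2, h3]
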